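/- For every clopen subset A of the Cantor set Ω = {0,1}^ℕ there exists a partition polynomial P such that μ_r(A) = P(r) for all r ∈ [0,1]. -/

import Mathlib

open MeasureTheory Polynomial

/-- `P` is a partition polynomial: `P(X) = ∑_{i=0}^n a_i X^i (1-X)^(n-i)` with
integers `0 ≤ a_i ≤ C(n,i)`. -/
def IsPartitionPolynomial (P : Polynomial ℤ) : Prop :=
  ∃ (n : ℕ) (a : ℕ → ℤ),
    (∀ i ≤ n, 0 ≤ a i ∧ a i ≤ (n.choose i : ℤ)) ∧
    P = ∑ i ∈ Finset.range (n + 1), C (a i) * X ^ i * (1 - X) ^ (n - i)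

/-- `μ` is the Bernoulli(`r`) product measure on the Cantor set `ℕ → Bool`:
every cylinder specifying the coordinates in a finite set `s` to agree with `e`
has measure `r^(#1s) * (1-r)^(#0s)`.  (This characterizes the infinite power of
the `(r, 1-r)` measure on `{0,1}` uniquely among Borel measures.) -/
def IsBernoulli (r : ℝ) (μ : Measure (ℕ → Bool)) : Prop :=
  ∀ (s : Finset ℕ) (e : ℕ → Bool),
    μ {x : ℕ → Bool | ∀ i ∈ s, x i = e i} =
      ENNReal.ofReal (r ^ (s.filter fun i => e i = true).card *
        (1 - r) ^ (s.filter fun i => e i = false).card)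

lemma clopen_finite_coords (A : Set (ℕ → Bool)) (hA : IsClopen A) :
    ∃ n : ℕ, ∀ x y : ℕ → Bool, (∀ i < n, x i = y i) → x ∈ A → y ∈ A := by
  classical
  have hcomp : IsCompact A := hA.isClosed.isCompact
  have hop := hA.isOpen
  rw [isOpen_pi_iff] at hop
  choose I u hIu hsub using hop
  set U : A → Set (ℕ → Bool) := fun z => {y | ∀ i ∈ I z.1 z.2, y i = z.1 i} with hU
  have hUopen : ∀ z : A, IsOpen (U z) := by
    intro z
    have : U z = Set.pi (I z.1 z.2 : Set ℕ) (fun i => {z.1 i}) := by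
      ext y; simp [hU, Set.mem_pi]
    rw [this]
    exact isOpen_set_pi (I z.1 z.2).finite_toSet (fun i _ => isOpen_discrete _)
  have hUsub : ∀ z : A, U z ⊆ A := by
    intro z y hy
    apply hsub z.1 z.2
    intro i hi
    have := (hIu z.1 z.2 i hi).2
    simpa [hy i hi] using this
  have hcov : A ⊆ ⋃ z : A, U z := fun x hx =>
    Set.mem_iUnion.2 ⟨⟨x, hx⟩, fun i _ => rfl⟩
  obtain ⟨t, ht⟩ := hcomp.elim_finite_subcover U hUopen hcov
  refine ⟨(t.sup fun z => (I z.1 z.2).sup (· + 1)), ?_⟩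
  intro x y hxy hx
  obtain ⟨z, hzt, hz⟩ := Set.mem_iUnion₂.1 (ht hx)
  apply hUsub z
  intro i hi
  rw [← hxy i ?_, hz i hi]
  calc i < i + 1 := Nat.lt_succ_self i
    _ ≤ (I z.1 z.2).sup (· + 1) := Finset.le_sup hi
    _ ≤ _ := Finset.le_sup (f := fun z : A => (I z.1 z.2).sup (· + 1)) hzt

/-- every clopen subset of the Cantor set is represented by a
partition polynomial. -/
theorem exists_partition_polynomial_of_isClopen (A : Set (ℕ → Bool)) (hA : IsClopen A) :
    ∃ P : Polynomial ℤ, IsPartitionPolynomial P ∧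
      ∀ r ∈ Set.Icc (0 : ℝ) 1, ∀ μ : Measure (ℕ → Bool), IsBernoulli r μ →
        μ A = ENNReal.ofReal (aeval r P) := by
  classical
  obtain ⟨n, hn⟩ := clopen_finite_coords A hA
  set ext : (Fin n → Bool) → (ℕ → Bool) :=
    fun v i => if h : i < n then v ⟨i, h⟩ else false with hext
  set T : Finset (Fin n → Bool) := Finset.univ.filter (fun v => ext v ∈ A) with hT
  set cyl : (Fin n → Bool) → Set (ℕ → Bool) :=
    fun v => {x | ∀ i ∈ Finset.range n, x i = ext v i} with hcyl
  set tc : (Fin n → Bool) → ℕ :=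
    fun v => ((Finset.range n).filter fun i => ext v i = true).card with htc
  set a : ℕ → ℤ := fun i => ((T.filter fun v => tc v = i).card : ℤ) with ha
  -- A is the union of the cylinders over T
  have hAeq : A = ⋃ v ∈ T, cyl v := by
    ext x
    constructor
    · intro hx
      refine Set.mem_iUnion₂.2 ⟨fun j : Fin n => x j, ?_, ?_⟩
      · simp only [hT, Finset.mem_filter, Finset.mem_univ, true_and]
        exact hn x _ (fun i hi => by simp [hext, hi]) hx
      · intro i hi
        simp only [Finset.mem_range] at hi
        simp [hext, hcyl, hi]
    · intro hx
      obtain ⟨v, hvT, hv⟩ := Set.mem_iUnion₂.1 hx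
      simp only [hT, Finset.mem_filter, Finset.mem_univ, true_and] at hvT
      exact hn (ext v) x (fun i hi => (hv i (Finset.mem_range.2 hi)).symm) hvT
  -- cylinders are measurable
  have hmeas : ∀ v : Fin n → Bool, MeasurableSet (cyl v) := by
    intro v
    have : cyl v = ⋂ i ∈ Finset.range n, {x : ℕ → Bool | x i = ext v i} := by
      ext x; simp [hcyl]
    rw [this]
    exact MeasurableSet.biInter (Finset.range n).countable_toSet
      (fun i _ => measurableSet_eq_fun (measurable_pi_apply i) measurable_const)
  -- cylinders are pairwise disjoint
  have hdisj : (T : Set (Fin n → Bool)).PairwiseDisjoint cyl := by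
    intro v _ w _ hvw
    refine Set.disjoint_left.2 fun x hxv hxw => hvw ?_
    funext j
    have h1 := hxv j.1 (Finset.mem_range.2 j.2)
    have h2 := hxw j.1 (Finset.mem_range.2 j.2)
    have e1 : ext v j.1 = v j := by simp [hext, j.2]
    have e2 : ext w j.1 = w j := by simp [hext, j.2]
    rw [e1] at h1; rw [e2] at h2
    rw [← h1, h2]
  -- number of false coordinates
  have hf : ∀ v : Fin n → Bool,
      ((Finset.range n).filter fun i => ext v i = false).card = n - tc v := by
    intro v
    have := Finset.card_filter_add_card_filter_not
      (s := Finset.range n) (p := fun i => ext v i = true)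
    simp only [Finset.card_range] at this
    have heq : ((Finset.range n).filter fun i => ¬ ext v i = true)
        = (Finset.range n).filter fun i => ext v i = false := by
      apply Finset.filter_congr
      intro i _
      simp [Bool.not_eq_true]
    rw [heq] at this
    simp only [htc]
    omega
  have htc_le : ∀ v, tc v ≤ n := fun v =>
    le_trans (Finset.card_filter_le _ _) (by simp)
  have ha_bound : ∀ i ≤ n, 0 ≤ a i ∧ a i ≤ (n.choose i : ℤ) := by
    intro i _
    refine ⟨Int.ofNat_nonneg _, ?_⟩
    have hcard : (T.filter fun v => tc v = i).card ≤ n.choose i := by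
      refine le_trans (Finset.card_le_card
        (Finset.filter_subset_filter _ (Finset.subset_univ T))) ?_
      have hmaps : ∀ v ∈ Finset.univ.filter (fun v : Fin n → Bool => tc v = i),
          ((Finset.range n).filter fun j => ext v j = true)
            ∈ (Finset.range n).powersetCard i := by
        intro v hv
        simp only [Finset.mem_filter, Finset.mem_univ, true_and] at hv
        rw [Finset.mem_powersetCard]
        exact ⟨Finset.filter_subset _ _, hv⟩
      have hinj := Finset.card_le_card_of_injOn
        (f := fun v : Fin n → Bool => (Finset.range n).filter fun j => ext v j = true)
        hmaps ?_
      · simpa [Finset.card_powersetCard, Finset.card_range] using hinj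
      · intro v hv w hw hvw
        have hvw2 : (Finset.range n).filter (fun j => ext v j = true)
            = (Finset.range n).filter (fun j => ext w j = true) := hvw
        funext j
        have hjv : ext v j.1 = ext w j.1 := by
          have hj : (j : ℕ) ∈ Finset.range n := Finset.mem_range.2 j.2
          by_cases hm : (j : ℕ) ∈ (Finset.range n).filter fun k => ext v k = true
          · have hm' : (j : ℕ) ∈ (Finset.range n).filter fun k => ext w k = true :=
              hvw2 ▸ hm
            simp only [Finset.mem_filter] at hm hm'
            rw [hm.2, hm'.2]
          · have hm' : (j : ℕ) ∉ (Finset.range n).filter fun k => ext w k = true :=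
              hvw2 ▸ hm
            simp only [Finset.mem_filter, hj, true_and] at hm hm'
            rw [Bool.not_eq_true] at hm hm'
            rw [hm, hm']
        simpa [hext, j.2] using hjv
    simp only [ha]
    exact_mod_cast hcard
  refine ⟨∑ i ∈ Finset.range (n + 1), C (a i) * X ^ i * (1 - X) ^ (n - i),
    ⟨n, a, ha_bound, rfl⟩, ?_⟩
  intro r hr μ hμ
  have h0 : (0 : ℝ) ≤ r := hr.1
  have h1 : (0 : ℝ) ≤ 1 - r := by linarith [hr.2]
  have hμA : μ A = ∑ v ∈ T, ENNReal.ofReal (r ^ tc v * (1 - r) ^ (n - tc v)) := by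
    rw [hAeq, measure_biUnion_finset hdisj (fun v _ => hmeas v)]
    refine Finset.sum_congr rfl fun v _ => ?_
    rw [hμ (Finset.range n) (ext v), hf v]
  rw [hμA]
  have haev : aeval r (∑ i ∈ Finset.range (n + 1), C (a i) * X ^ i * (1 - X) ^ (n - i))
      = ∑ i ∈ Finset.range (n + 1), (a i : ℝ) * r ^ i * (1 - r) ^ (n - i) := by
    simp [map_sum]
  rw [haev, ENNReal.ofReal_sum_of_nonneg (fun i hi =>
    mul_nonneg (mul_nonneg (by exact_mod_cast (ha_bound i (Nat.lt_succ_iff.mp (Finset.mem_range.mp hi))).1)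
      (pow_nonneg h0 _)) (pow_nonneg h1 _))]
  rw [← Finset.sum_fiberwise_of_maps_to (g := tc) (t := Finset.range (n + 1))
      (fun v (_ : v ∈ T) => Finset.mem_range.2 (Nat.lt_succ_of_le (htc_le v)))
      (fun v => ENNReal.ofReal (r ^ tc v * (1 - r) ^ (n - tc v)))]
  refine (Finset.sum_congr rfl fun i _ => ?_).symm
  have hinner : ∀ v ∈ T.filter (fun v => tc v = i),
      ENNReal.ofReal (r ^ tc v * (1 - r) ^ (n - tc v))
        = ENNReal.ofReal (r ^ i * (1 - r) ^ (n - i)) := by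
    intro v hv
    have : tc v = i := (Finset.mem_filter.1 hv).2
    rw [this]
  rw [Finset.sum_congr rfl hinner, Finset.sum_const, nsmul_eq_mul]
  rw [show ((a i : ℝ)) * r ^ i * (1 - r) ^ (n - i)
      = ((T.filter fun v => tc v = i).card : ℝ) * (r ^ i * (1 - r) ^ (n - i)) by
    push_cast [ha]; ring]
  rw [ENNReal.ofReal_mul (Nat.cast_nonneg _), ENNReal.ofReal_natCast]
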